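/- The singular order of the vacuum polarization causal distribution is 2: for d̂(k) = (2π/3)(2m² + k²) sgn(k⁻) θ(k² − 4m²) √(1 − 4m²/k²), the limit lim_{α→0⁺} α² d̂(k/α) = (2π/3) k² θ(k²) sgn(k⁻) holds for all k with k² ≠ 0, and no power α^s with s < 2 gives a nonzero finite limit. -/
import Mathlib


open Filter Topology Real

/-- The vacuum polarization causal distribution scalar
d̂(k) = (2π/3)(2m² + k²) sgn(k⁻) θ(k² − 4m²) √(1 − 4m²/k²), as a function of the
light-front square k² and of k⁻. -/
noncomputable def dHat (m k2 kminus : ℝ) : ℝ :=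
  (2 * π / 3) * (2 * m ^ 2 + k2) * Real.sign kminus *
    (if 4 * m ^ 2 < k2 then 1 else 0) * Real.sqrt (1 - 4 * m ^ 2 / k2)

lemma dHat_of_neg (m k2 kminus α : ℝ) (hm : 0 < m) (hk2 : k2 < 0) (hα : 0 < α) :
    dHat m (k2 / α ^ 2) kminus = 0 := by
  have h : ¬ (4 * m ^ 2 < k2 / α ^ 2) := by
    have : k2 / α ^ 2 < 0 := div_neg_of_neg_of_pos hk2 (by positivity)
    nlinarith
  simp [dHat, h]

lemma rpow_two_eq (α : ℝ) : α ^ (2:ℝ) = α ^ 2 := by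
  rw [show (2:ℝ) = ((2:ℕ):ℝ) by norm_num, Real.rpow_natCast]

/-- The eventual form of α² d̂(k²/α²) for 0 < k2. -/
lemma key_ev (m k2 kminus : ℝ) (hm : 0 < m) (hk2 : 0 < k2) :
    ∀ᶠ α in nhdsWithin (0:ℝ) (Set.Ioi 0),
      α ^ (2:ℝ) * dHat m (k2 / α ^ 2) kminus =
        (2 * π / 3) * (2 * m ^ 2 * α ^ 2 + k2) * Real.sign kminus *
          Real.sqrt (1 - 4 * m ^ 2 * α ^ 2 / k2) := by
  have hδ : 0 < Real.sqrt k2 / (2 * m) := by positivity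
  filter_upwards [Ioo_mem_nhdsGT_of_mem (Set.left_mem_Ico.2 hδ)] with α hα
  obtain ⟨hα0, hαδ⟩ := hα
  have hαne : α ≠ 0 := ne_of_gt hα0
  have hcond : 4 * m ^ 2 < k2 / α ^ 2 := by
    rw [lt_div_iff₀ (by positivity)]
    have h1 : α * (2 * m) < Real.sqrt k2 := by
      rw [← lt_div_iff₀ (by positivity)]; exact hαδ
    have h2 : (α * (2 * m)) ^ 2 < (Real.sqrt k2) ^ 2 :=
      pow_lt_pow_left₀ h1 (by positivity) (by norm_num)
    rw [Real.sq_sqrt hk2.le] at h2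
    nlinarith
  have e1 : 1 - 4 * m ^ 2 / (k2 / α ^ 2) = 1 - 4 * m ^ 2 * α ^ 2 / k2 := by
    field_simp
  rw [rpow_two_eq, dHat, if_pos hcond, e1]
  have e2 : α ^ 2 * (2 * m ^ 2 + k2 / α ^ 2) = 2 * m ^ 2 * α ^ 2 + k2 := by
    field_simp
  calc α ^ 2 * ((2 * π / 3) * (2 * m ^ 2 + k2 / α ^ 2) * Real.sign kminus * 1 *
        Real.sqrt (1 - 4 * m ^ 2 * α ^ 2 / k2))
      = (2 * π / 3) * (α ^ 2 * (2 * m ^ 2 + k2 / α ^ 2)) * Real.sign kminus *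
        Real.sqrt (1 - 4 * m ^ 2 * α ^ 2 / k2) := by ring
    _ = _ := by rw [e2]

lemma part1 (m k2 kminus : ℝ) (hm : 0 < m) (hk2 : k2 ≠ 0) :
    Tendsto (fun α : ℝ => α ^ (2:ℝ) * dHat m (k2 / α ^ 2) kminus)
      (nhdsWithin 0 (Set.Ioi 0))
      (nhds ((2 * π / 3) * k2 * (if 0 < k2 then 1 else 0) * Real.sign kminus)) := by
  rcases lt_or_gt_of_ne hk2 with hneg | hpos
  · have : (if 0 < k2 then (1:ℝ) else 0) = 0 := if_neg (by linarith)
    rw [this]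
    have hev : ∀ᶠ α in nhdsWithin (0:ℝ) (Set.Ioi 0),
        (0:ℝ) = α ^ (2:ℝ) * dHat m (k2 / α ^ 2) kminus := by
      filter_upwards [self_mem_nhdsWithin] with α hα
      rw [dHat_of_neg m k2 kminus α hm hneg hα, mul_zero]
    rw [show (2 * π / 3) * k2 * 0 * Real.sign kminus = 0 by ring]
    exact tendsto_const_nhds.congr' hev
  · have hif : (if 0 < k2 then (1:ℝ) else 0) = 1 := if_pos hpos
    have hc : Tendsto (fun α : ℝ =>
        (2 * π / 3) * (2 * m ^ 2 * α ^ 2 + k2) * Real.sign kminus *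
          Real.sqrt (1 - 4 * m ^ 2 * α ^ 2 / k2))
        (nhdsWithin 0 (Set.Ioi 0))
        (nhds ((2 * π / 3) * k2 * (if 0 < k2 then 1 else 0) * Real.sign kminus)) := by
      have hcont : Continuous (fun α : ℝ =>
          (2 * π / 3) * (2 * m ^ 2 * α ^ 2 + k2) * Real.sign kminus *
            Real.sqrt (1 - 4 * m ^ 2 * α ^ 2 / k2)) := by
        fun_prop
      have := (hcont.tendsto 0).mono_left
        (nhdsWithin_le_nhds (s := Set.Ioi (0:ℝ)))
      convert this using 2
      simp [hif, Real.sqrt_one]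
    exact hc.congr' (EventuallyEq.symm (key_ev m k2 kminus hm hpos))

/-- the singular order of the vacuum polarization is 2:
α² d̂(k/α) → (2π/3) k² θ(k²) sgn(k⁻) as α → 0⁺ (k² scaling as k²/α²), and no
power α^s with s < 2 yields a nonzero finite limit. -/
theorem stmt13 (m k2 kminus : ℝ) (hm : 0 < m) (hk2 : k2 ≠ 0) (hkm : kminus ≠ 0) :
    Tendsto (fun α : ℝ => α ^ (2:ℝ) * dHat m (k2 / α ^ 2) kminus)
      (nhdsWithin 0 (Set.Ioi 0))
      (nhds ((2 * π / 3) * k2 * (if 0 < k2 then 1 else 0) * Real.sign kminus)) ∧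
    ∀ s : ℝ, s < 2 → ¬ ∃ c : ℝ, c ≠ 0 ∧
      Tendsto (fun α : ℝ => α ^ s * dHat m (k2 / α ^ 2) kminus)
        (nhdsWithin 0 (Set.Ioi 0)) (nhds c) := by
  refine ⟨part1 m k2 kminus hm hk2, ?_⟩
  rintro s hs ⟨c, hc, hT⟩
  rcases lt_or_gt_of_ne hk2 with hneg | hpos
  · -- the function is eventually 0, so c = 0
    have h0 : Tendsto (fun α : ℝ => α ^ s * dHat m (k2 / α ^ 2) kminus)
        (nhdsWithin 0 (Set.Ioi 0)) (nhds 0) := by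
      apply tendsto_const_nhds.congr'
      filter_upwards [self_mem_nhdsWithin] with α hα
      rw [dHat_of_neg m k2 kminus α hm hneg hα, mul_zero]
    exact hc (tendsto_nhds_unique hT h0)
  · -- α^(2-s) → 0, so α^2 dHat → 0, contradicting part1's nonzero limit
    have h2s : (0:ℝ) < 2 - s := by linarith
    have hp : Tendsto (fun α : ℝ => α ^ ((2:ℝ) - s)) (nhdsWithin 0 (Set.Ioi 0))
        (nhds 0) := by
      have := (Real.continuousAt_rpow_const 0 (2 - s) (Or.inr h2s.le)).tendsto
      rw [Real.zero_rpow (ne_of_gt h2s)] at this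
      exact this.mono_left nhdsWithin_le_nhds
    have hprod : Tendsto (fun α : ℝ =>
        α ^ ((2:ℝ) - s) * (α ^ s * dHat m (k2 / α ^ 2) kminus))
        (nhdsWithin 0 (Set.Ioi 0)) (nhds (0 * c)) := hp.mul hT
    rw [zero_mul] at hprod
    have hev : ∀ᶠ α in nhdsWithin (0:ℝ) (Set.Ioi 0),
        α ^ ((2:ℝ) - s) * (α ^ s * dHat m (k2 / α ^ 2) kminus)
          = α ^ (2:ℝ) * dHat m (k2 / α ^ 2) kminus := by
      filter_upwards [self_mem_nhdsWithin] with α hα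
      rw [← mul_assoc, ← Real.rpow_add hα]
      ring_nf
    have hL := tendsto_nhds_unique (hprod.congr' hev) (part1 m k2 kminus hm hk2)
    rw [if_pos hpos] at hL
    have hsign : Real.sign kminus ≠ 0 := by
      rcases lt_or_gt_of_ne hkm with h | h
      · rw [Real.sign_of_neg h]; norm_num
      · rw [Real.sign_of_pos h]; norm_num
    have hπ : π ≠ 0 := Real.pi_ne_zero
    have hne : (2 * π / 3) * k2 * 1 ≠ 0 := by positivity
    exact hsign ((mul_eq_zero.1 hL.symm).resolve_left hne)
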